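/- Let σ > 1, A > 0, η > 0, and h(σ) = 2σ²·log σ/(σ²−1). Set g(α) = (1+α)/2·η and z₊(α) = −A·g(α) + √((A/σ)²·g(α)² + h(σ)/σ²). Then for all α ≥ 1, the derivative of z₊ with respect to α satisfies z₊'(α) ≤ −(A·η/2)·(1 − 1/σ) < 0; in particular z₊ is strictly decreasing. -/

import Mathlib

open Real Set

/-- Standard normal cumulative distribution function. -/
noncomputable def stdNormalCDF (z : ℝ) : ℝ :=
  ∫ t in Set.Iic z, (Real.sqrt (2 * Real.pi))⁻¹ * Real.exp (-t ^ 2 / 2)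

theorem stmt5 (σ A η : ℝ) (hσ : 1 < σ) (hA : 0 < A) (hη : 0 < η)
    (h : ℝ) (hh : h = 2 * σ ^ 2 * Real.log σ / (σ ^ 2 - 1))
    (g zp : ℝ → ℝ)
    (hg : ∀ α, g α = (1 + α) / 2 * η)
    (hzp : ∀ α, zp α = -A * g α + Real.sqrt ((A / σ) ^ 2 * (g α) ^ 2 + h / σ ^ 2)) :
    (∀ α ∈ Set.Ici (1 : ℝ),
      deriv zp α ≤ -(A * η / 2) * (1 - 1 / σ) ∧ -(A * η / 2) * (1 - 1 / σ) < 0) ∧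
    StrictAntiOn zp (Set.Ici (1 : ℝ)) := by
  have hσ0 : (0:ℝ) < σ := lt_trans one_pos hσ
  have hh0 : 0 < h := by
    rw [hh]
    apply div_pos
    · have : 0 < Real.log σ := Real.log_pos hσ
      positivity
    · nlinarith
  have hc0 : 0 < h / σ ^ 2 := by positivity
  -- g as explicit function
  have hgd : ∀ α : ℝ, HasDerivAt g (η / 2) α := by
    intro α
    have hzpf : g = fun α => (1 + α) / 2 * η := funext hg
    rw [hzpf]
    have : HasDerivAt (fun α : ℝ => (1 + α) / 2 * η) (1 / 2 * η) α := by
      exact (((hasDerivAt_id α).const_add 1).div_const 2).mul_const η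
    convert this using 1; ring
  set u : ℝ → ℝ := fun α => (A / σ) ^ 2 * (g α) ^ 2 + h / σ ^ 2 with hu
  have hu0 : ∀ α, 0 < u α := by
    intro α; have : 0 ≤ (A / σ) ^ 2 * (g α) ^ 2 := by positivity
    simp only [hu]; linarith
  have hud : ∀ α : ℝ, HasDerivAt u ((A / σ) ^ 2 * (2 * g α * (η / 2))) α := by
    intro α
    have := (((hgd α).pow 2).const_mul ((A / σ) ^ 2)).add_const (h / σ ^ 2)
    refine this.congr_deriv ?_; ring
  have hderiv : ∀ α : ℝ, HasDerivAt zp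
      (-A * (η / 2) + (A / σ) ^ 2 * g α * η / (2 * Real.sqrt (u α))) α := by
    intro α
    have hzpf : zp = fun α => -A * g α + Real.sqrt (u α) := funext hzp
    rw [hzpf]
    have hs : HasDerivAt (fun α => Real.sqrt (u α))
        (1 / (2 * Real.sqrt (u α)) * ((A / σ) ^ 2 * (2 * g α * (η / 2)))) α :=
      (Real.hasDerivAt_sqrt (ne_of_gt (hu0 α))).comp α (hud α)
    have := ((hgd α).const_mul (-A)).add hs
    refine this.congr_deriv ?_
    field_simp
  have hbound : ∀ α ∈ Set.Ici (1:ℝ), deriv zp α ≤ -(A * η / 2) * (1 - 1 / σ) := by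
    intro α hα
    rw [(hderiv α).deriv]
    have hgpos : 0 < g α := by
      rw [hg]; have : (1:ℝ) ≤ α := hα; positivity
    have hsq : 0 < Real.sqrt (u α) := Real.sqrt_pos.mpr (hu0 α)
    have hge : (A / σ) * g α ≤ Real.sqrt (u α) := by
      have : (A / σ) * g α = Real.sqrt (((A / σ) * g α) ^ 2) := by
        rw [Real.sqrt_sq (by positivity)]
      rw [this]
      apply Real.sqrt_le_sqrt
      have : 0 < h / σ ^ 2 := hc0
      nlinarith [hu0 α]
    have key : (A / σ) ^ 2 * g α * η / (2 * Real.sqrt (u α)) ≤ (A / σ) * η / 2 := by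
      rw [div_le_iff₀ (by positivity)]
      have hAσ : 0 < A / σ := by positivity
      nlinarith [mul_le_mul_of_nonneg_left hge (le_of_lt (mul_pos hAσ hη))]
    have heq : A / σ * η / 2 = -(A * η / 2) * (1 - 1 / σ) - (-A * (η / 2)) := by
      field_simp; ring
    linarith [key]
  have hneg : -(A * η / 2) * (1 - 1 / σ) < 0 := by
    have h1 : (0:ℝ) < 1 - 1 / σ := by
      have : 1 / σ < 1 := by rw [div_lt_one hσ0]; exact hσ
      linarith
    nlinarith [mul_pos (show (0:ℝ) < A * η / 2 by positivity) h1]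
  refine ⟨fun α hα => ⟨hbound α hα, hneg⟩, ?_⟩
  apply strictAntiOn_of_deriv_neg (convex_Ici 1)
  · exact fun α _ => ((hderiv α).differentiableAt.continuousAt).continuousWithinAt
  · intro α hα
    have hα' : α ∈ Set.Ici (1:ℝ) := by
      rw [interior_Ici] at hα; exact le_of_lt (Set.mem_Ioi.mp hα)
    exact lt_of_le_of_lt (hbound α hα') hneg
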